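/- Let d ≥ 1, let A, B, C be fixed d×d real matrices, and let M be a d×d standard real Gaussian matrix (i.i.d. entries of mean 0 and variance 1). Then, entrywise, E[ M A Mᵀ B M C Mᵀ ] = trace(A) trace(C) · B + trace(AC) trace(B) · I + trace(ACᵀ) · Bᵀ. -/

import Mathlib

open MeasureTheory ProbabilityTheory Matrix

/-- The law of a `d × d` standard real Gaussian matrix: i.i.d. entries, each real Gaussian of
mean `0` and variance `1`. -/
noncomputable def realGaussianMat (d : ℕ) : Measure (Fin d × Fin d → ℝ) :=
  Measure.pi fun _ => gaussianReal 0 1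

/-- The real Gaussian matrix with entries `m(a,b) = ω(a,b)`. -/
def rmat {d : ℕ} (ω : Fin d × Fin d → ℝ) : Matrix (Fin d) (Fin d) ℝ :=
  Matrix.of fun a b => ω (a, b)

section Auxiliary

open scoped ENNReal NNReal
open Real

namespace RGSOE

/-! ### Integrals of products over pi measures -/

section PiIntegral

variable {α : Type*} [MeasurableSpace α]

theorem my_integral_fin_prod {n : ℕ} (μ : Measure α)
    [IsProbabilityMeasure μ] (f : Fin n → α → ℝ) :
    ∫ x : Fin n → α, ∏ i, f i (x i) ∂(Measure.pi fun _ => μ) = ∏ i, ∫ x, f i x ∂μ := by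
  induction n with
  | zero => simp
  | succ n n_ih =>
      calc
        _ = ∫ x : α × (Fin n → α),
            f 0 x.1 * ∏ i : Fin n, f (Fin.succ i) (x.2 i) ∂(μ.prod (Measure.pi fun _ => μ)) := by
          rw [← ((measurePreserving_piFinSuccAbove
            (fun _ : Fin (n+1) => μ) 0).symm).integral_comp']
          congr 1 with x
          simp [Fin.prod_univ_succ]
        _ = (∫ x, f 0 x ∂μ) * ∏ i : Fin n, ∫ x : α, f (Fin.succ i) x ∂μ := by
          rw [← n_ih (fun i => f (Fin.succ i)), ← integral_prod_mul]
        _ = ∏ i, ∫ x, f i x ∂μ := by rw [Fin.prod_univ_succ]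

theorem my_integrable_fin_prod {n : ℕ} (μ : Measure α)
    [IsProbabilityMeasure μ] {f : Fin n → α → ℝ} (hf : ∀ i, Integrable (f i) μ) :
    Integrable (fun x : Fin n → α => ∏ i, f i (x i)) (Measure.pi fun _ => μ) := by
  induction n with
  | zero => simp only [Finset.univ_eq_empty, Finset.prod_empty]; exact integrable_const 1
  | succ n n_ih =>
      have := ((measurePreserving_piFinSuccAbove (fun _ : Fin (n+1) => μ) 0).symm)
      rw [← this.integrable_comp_emb (MeasurableEquiv.measurableEmbedding _)]
      have h2 : Integrable (fun (x : Fin n → α) ↦ ∏ j, f (Fin.succ j) (x j))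
          (Measure.pi fun _ => μ) := n_ih (fun i ↦ hf _)
      have h3 := Integrable.mul_prod (hf 0) h2
      apply h3.congr
      filter_upwards with x
      simp [Fin.prod_univ_succ, Function.comp]

theorem my_integrable_fintype_prod {ι : Type*} [Fintype ι] (μ : Measure α)
    [IsProbabilityMeasure μ] {f : ι → α → ℝ} (hf : ∀ i, Integrable (f i) μ) :
    Integrable (fun x : ι → α => ∏ i, f i (x i)) (Measure.pi fun _ => μ) := by
  let e := (Fintype.equivFin ι).symm
  rw [← ((measurePreserving_piCongrLeft (fun _ : ι => μ) e).integrable_comp_emb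
    (MeasurableEquiv.measurableEmbedding _))]
  have h := my_integrable_fin_prod μ (f := fun j => f (e j)) (fun j => hf _)
  apply h.congr
  filter_upwards with x
  simp only [Function.comp_def, MeasurableEquiv.coe_piCongrLeft]
  rw [← Equiv.prod_comp e]
  simp [Equiv.piCongrLeft_apply_apply]

theorem my_integral_fintype_prod {ι : Type*} [Fintype ι] (μ : Measure α)
    [IsProbabilityMeasure μ] (f : ι → α → ℝ) :
    ∫ x : ι → α, ∏ i, f i (x i) ∂(Measure.pi fun _ => μ) = ∏ i, ∫ x, f i x ∂μ := by
  let e := (Fintype.equivFin ι).symm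
  rw [← (measurePreserving_piCongrLeft (fun _ : ι => μ) e).integral_comp', ← e.prod_comp]
  rw [← my_integral_fin_prod μ (fun j => f (e j))]
  congr 1 with x
  rw [← Equiv.prod_comp e]
  simp [MeasurableEquiv.coe_piCongrLeft, Equiv.piCongrLeft_apply_apply]

end PiIntegral

/-! ### Moments of the standard real Gaussian -/

lemma pdf_eq (x : ℝ) : gaussianPDFReal 0 1 x = (√(2*π))⁻¹ * exp (-(1/2) * x^2) := by
  simp [gaussianPDFReal]
  ring_nf
  exact Or.inl trivial

lemma integral_gaussianReal_eq (f : ℝ → ℝ) :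
    ∫ x, f x ∂(gaussianReal 0 1) = ∫ x, gaussianPDFReal 0 1 x * f x := by
  rw [gaussianReal_of_var_ne_zero 0 one_ne_zero]
  have hm : Measurable fun x => (gaussianPDFReal 0 1 x).toNNReal :=
    (measurable_gaussianPDFReal 0 1).real_toNNReal
  rw [show gaussianPDF 0 1 = fun x => ((gaussianPDFReal 0 1 x).toNNReal : ℝ≥0∞) from rfl]
  rw [integral_withDensity_eq_integral_smul hm]
  congr 1 with x
  simp [NNReal.smul_def, Real.coe_toNNReal _ (gaussianPDFReal_nonneg 0 1 x)]

lemma integrable_gaussianReal_iff (f : ℝ → ℝ) :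
    Integrable f (gaussianReal 0 1) ↔
      Integrable (fun x => gaussianPDFReal 0 1 x * f x) := by
  rw [gaussianReal_of_var_ne_zero 0 one_ne_zero]
  have hm : Measurable fun x => (gaussianPDFReal 0 1 x).toNNReal :=
    (measurable_gaussianPDFReal 0 1).real_toNNReal
  rw [show gaussianPDF 0 1 = fun x => ((gaussianPDFReal 0 1 x).toNNReal : ℝ≥0∞) from rfl]
  rw [integrable_withDensity_iff_integrable_smul hm]
  constructor <;> intro h <;> apply h.congr <;> filter_upwards with x <;>
    simp [NNReal.smul_def, Real.coe_toNNReal _ (gaussianPDFReal_nonneg 0 1 x)]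

lemma integrable_pow_mul_exp (b : ℝ) (hb : 0 < b) (n : ℕ) :
    Integrable (fun x : ℝ => x ^ n * exp (-b * x^2)) := by
  have h := integrable_rpow_mul_exp_neg_mul_sq hb (s := (n:ℝ))
    (lt_of_lt_of_le neg_one_lt_zero n.cast_nonneg)
  apply h.congr
  filter_upwards with x
  rw [Real.rpow_natCast]

noncomputable def gmom (n : ℕ) : ℝ := ∫ x, x ^ n ∂(gaussianReal 0 1)

lemma integrable_pdf_mul_pow (n : ℕ) :
    Integrable (fun x : ℝ => gaussianPDFReal 0 1 x * x ^ n) := by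
  have h := ((integrable_pow_mul_exp (1/2) one_half_pos n).const_mul (√(2*π))⁻¹)
  apply h.congr
  filter_upwards with x
  rw [pdf_eq]
  ring_nf

lemma integrable_pow_gauss (n : ℕ) :
    Integrable (fun x : ℝ => x ^ n) (gaussianReal 0 1) :=
  (integrable_gaussianReal_iff _).2 (integrable_pdf_mul_pow n)

lemma gmom_zero : gmom 0 = 1 := by
  simp [gmom]

lemma gmom_odd (n : ℕ) (hn : Odd n) : gmom n = 0 := by
  have h1 : (⟨(-1:ℝ)^2, sq_nonneg _⟩ : NNReal) * 1 = 1 := by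
    ext; norm_num
  have hmap : (gaussianReal 0 1).map (fun x => (-1:ℝ) * x) = gaussianReal 0 1 := by
    rw [gaussianReal_map_const_mul (-1)]
    congr 1
    · simp
  have h2 : gmom n = ∫ x, ((-1) * x) ^ n ∂(gaussianReal 0 1) := by
    calc gmom n = ∫ x, x ^ n ∂((gaussianReal 0 1).map (fun x => (-1:ℝ) * x)) := by
          rw [hmap]; rfl
    _ = ∫ x, ((-1) * x) ^ n ∂(gaussianReal 0 1) := by
        rw [integral_map (by fun_prop) (by fun_prop)]
  have h3 : gmom n = - gmom n := by
    nth_rewrite 1 [h2]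
    simp only [neg_one_mul, hn.neg_pow, integral_neg, gmom]
  linarith

lemma hasDerivAt_pdf (x : ℝ) :
    HasDerivAt (fun y => gaussianPDFReal 0 1 y) (-x * gaussianPDFReal 0 1 x) x := by
  have hrw : (fun y => gaussianPDFReal 0 1 y) = fun y => (√(2*π))⁻¹ * exp (-(1/2) * y^2) :=
    funext pdf_eq
  rw [hrw, pdf_eq]
  have h : HasDerivAt (fun y : ℝ => (√(2*π))⁻¹ * exp (-(1/2) * y^2))
      ((√(2*π))⁻¹ * (exp (-(1/2) * x^2) * (-(1/2) * (2 * x^1)))) x := by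
    exact (((hasDerivAt_pow 2 x).const_mul (-(1/2))).exp).const_mul _
  convert h using 1
  ring

noncomputable def In (n : ℕ) : ℝ := ∫ x, gaussianPDFReal 0 1 x * x ^ n

lemma gmom_eq_In (n : ℕ) : gmom n = In n := integral_gaussianReal_eq _

lemma In_rec (n : ℕ) : In (n + 2) = (n + 1) * In n := by
  set c := (n : ℝ) + 1 with hc
  have hderiv : ∀ x : ℝ, HasDerivAt (fun y => y ^ (n+1) * gaussianPDFReal 0 1 y)
      ((↑(n+1) * x ^ n) * gaussianPDFReal 0 1 x + x^(n+1) * (-x * gaussianPDFReal 0 1 x)) x :=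
    fun x => (hasDerivAt_pow (n+1) x).mul (hasDerivAt_pdf x)
  have hint1 : Integrable (fun x : ℝ => gaussianPDFReal 0 1 x * x ^ n) :=
    integrable_pdf_mul_pow n
  have hint2 : Integrable (fun x : ℝ => gaussianPDFReal 0 1 x * x ^ (n+2)) :=
    integrable_pdf_mul_pow (n+2)
  have hf : Integrable (fun x : ℝ => x ^ (n+1) * gaussianPDFReal 0 1 x) := by
    apply (integrable_pdf_mul_pow (n+1)).congr
    filter_upwards with x using (mul_comm _ _)
  have hf' : Integrable (fun x : ℝ =>
      (↑(n+1) * x ^ n) * gaussianPDFReal 0 1 x + x^(n+1) * (-x * gaussianPDFReal 0 1 x)) := by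
    apply ((hint1.const_mul c).sub hint2).congr
    filter_upwards with x
    simp only [Pi.sub_apply]
    push_cast
    ring
  have h0 := integral_eq_zero_of_hasDerivAt_of_integrable hderiv hf' hf
  have h1 : ∫ x : ℝ, ((↑(n+1) * x ^ n) * gaussianPDFReal 0 1 x
        + x^(n+1) * (-x * gaussianPDFReal 0 1 x))
      = c * In n - In (n+2) := by
    have heq : (fun x : ℝ => (↑(n+1) * x ^ n) * gaussianPDFReal 0 1 x
          + x^(n+1) * (-x * gaussianPDFReal 0 1 x))
        = fun x : ℝ => c * (gaussianPDFReal 0 1 x * x ^ n)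
            - gaussianPDFReal 0 1 x * x ^ (n+2) := by
      funext x; push_cast; ring
    rw [heq, integral_sub (hint1.const_mul c) hint2, integral_const_mul]
    rfl
  rw [h0] at h1
  linarith

lemma gmom_two : gmom 2 = 1 := by
  have := In_rec 0
  rw [gmom_eq_In, this]
  have h0 : In 0 = 1 := by rw [← gmom_eq_In, gmom_zero]
  rw [h0]; norm_num

lemma gmom_four : gmom 4 = 3 := by
  have := In_rec 2
  rw [gmom_eq_In, this, ← gmom_eq_In, gmom_two]
  norm_num

lemma gmom_one : gmom 1 = 0 := gmom_odd 1 ⟨0, rfl⟩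
lemma gmom_three : gmom 3 = 0 := gmom_odd 3 ⟨1, rfl⟩

/-! ### The fourth-moment (Wick/Isserlis) formula for i.i.d. standard Gaussians -/

section E4
variable {ι : Type*} [Fintype ι] [DecidableEq ι]

def cnt (p q r s : ι) : ι → ℕ := fun t =>
  (if p = t then 1 else 0) + (if q = t then 1 else 0) + (if r = t then 1 else 0) +
    (if s = t then 1 else 0)

lemma prod_pair' {x y : ι} (hxy : x ≠ y) (f : ι → ℝ) (hf : ∀ t, t ≠ x → t ≠ y → f t = 1) :
    ∏ t, f t = f x * f y := by
  rw [← Finset.prod_pair hxy]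
  refine (Finset.prod_subset (Finset.subset_univ _) (fun t _ ht => ?_)).symm
  simp only [Finset.mem_insert, Finset.mem_singleton, not_or] at ht
  exact hf t ht.1 ht.2

lemma prod_gmom_cnt (p q r s : ι) :
    ∏ t, gmom (cnt p q r s t) =
      (if p = q then (1:ℝ) else 0) * (if r = s then (1:ℝ) else 0) +
      (if p = r then (1:ℝ) else 0) * (if q = s then (1:ℝ) else 0) +
      (if p = s then (1:ℝ) else 0) * (if q = r then (1:ℝ) else 0) := by
  by_cases hpq : p = q
  · subst hpq
    by_cases hrs : r = s
    · subst hrs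
      by_cases hpr : p = r
      · subst hpr
        rw [Finset.prod_eq_single_of_mem p (Finset.mem_univ p) (fun t _ ht => ?_)]
        · simp [cnt, gmom_four]; norm_num
        · simp only [cnt, if_neg (fun h => ht h.symm : ¬ p = t)]
          exact gmom_zero
      · rw [prod_pair' hpr _ (fun t htp htr => ?_)]
        · have hrp : ¬ r = p := fun h => hpr h.symm
          simp [cnt, hpr, hrp, gmom_two]
        · simp only [cnt, if_neg (fun h => htp h.symm : ¬ p = t),
            if_neg (fun h => htr h.symm : ¬ r = t)]
          exact gmom_zero
    · rw [Finset.prod_eq_zero (Finset.mem_univ r) ?_]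
      · by_cases hpr : p = r <;> by_cases hps : p = s
        · exact absurd (hpr.symm.trans hps) hrs
        · simp [hrs, hps]
        · simp [hrs, hpr]
        · simp [hrs, hpr, hps]
      · have hsr : ¬ s = r := fun h => hrs h.symm
        by_cases hpr : p = r
        · simp only [cnt, if_pos hpr, if_neg hsr]
          exact gmom_three
        · simp only [cnt, if_neg hpr, if_neg hsr]
          exact gmom_one
  · by_cases hrs : r = s
    · subst hrs
      rw [Finset.prod_eq_zero (Finset.mem_univ p) ?_]
      · by_cases hpr : p = r <;> by_cases hqr : q = r
        · exact absurd (hpr.trans hqr.symm) hpq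
        · simp [hpq, hqr]
        · simp [hpq, hpr]
        · simp [hpq, hpr, hqr]
      · have hqp : ¬ q = p := fun h => hpq h.symm
        by_cases hrp : r = p
        · simp only [cnt, if_pos rfl, if_neg hqp, if_pos hrp]
          exact gmom_three
        · simp only [cnt, if_pos rfl, if_neg hqp, if_neg hrp]
          exact gmom_one
    · by_cases hpr : p = r
      · subst hpr
        by_cases hqs : q = s
        · subst hqs
          rw [prod_pair' hpq _ (fun t htp htq => ?_)]
          · have hqp : ¬ q = p := fun h => hpq h.symm
            simp [cnt, hpq, hqp, gmom_two]
          · simp only [cnt, if_neg (fun h => htp h.symm : ¬ p = t),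
              if_neg (fun h => htq h.symm : ¬ q = t)]
            exact gmom_zero
        · rw [Finset.prod_eq_zero (Finset.mem_univ q) ?_]
          · simp [hpq, hqs, hrs]
          · have hpq' : ¬ p = q := hpq
            have hsq : ¬ s = q := fun h => hqs h.symm
            simp only [cnt, if_neg hpq', if_pos rfl, if_neg hsq]
            exact gmom_one
      · by_cases hps : p = s
        · subst hps
          by_cases hqr : q = r
          · subst hqr
            rw [prod_pair' hpq _ (fun t htp htq => ?_)]
            · have hqp : ¬ q = p := fun h => hpq h.symm
              simp [cnt, hpq, hqp, gmom_two]
            · simp only [cnt, if_neg (fun h => htp h.symm : ¬ p = t),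
                if_neg (fun h => htq h.symm : ¬ q = t)]
              exact gmom_zero
          · rw [Finset.prod_eq_zero (Finset.mem_univ r) ?_]
            · simp [hpq, hpr, hqr]
            · have hpr' : ¬ p = r := hpr
              have hqr' : ¬ q = r := hqr
              simp only [cnt, if_neg hpr', if_neg hqr', if_pos rfl]
              exact gmom_one
        · rw [Finset.prod_eq_zero (Finset.mem_univ p) ?_]
          · simp [hpq, hpr, hps]
          · have hqp : ¬ q = p := fun h => hpq h.symm
            have hrp : ¬ r = p := fun h => hpr h.symm
            have hsp : ¬ s = p := fun h => hps h.symm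
            simp only [cnt, if_pos rfl, if_neg hqp, if_neg hrp, if_neg hsp]
            exact gmom_one

lemma mul_eq_prod (p q r s : ι) (ω : ι → ℝ) :
    ω p * ω q * ω r * ω s = ∏ t, ω t ^ (cnt p q r s t) := by
  simp only [cnt, pow_add, Finset.prod_mul_distrib]
  simp [pow_ite, Finset.prod_ite_eq]

lemma integrable_four (p q r s : ι) :
    Integrable (fun ω : ι → ℝ => ω p * ω q * ω r * ω s)
      (Measure.pi fun _ => gaussianReal 0 1) := by
  have h := my_integrable_fintype_prod (gaussianReal 0 1)
      (f := fun t (x : ℝ) => x ^ (cnt p q r s t)) (fun t => integrable_pow_gauss _)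
  apply h.congr
  filter_upwards with ω using (mul_eq_prod p q r s ω).symm

lemma E4 (p q r s : ι) :
    ∫ ω : ι → ℝ, ω p * ω q * ω r * ω s ∂(Measure.pi fun _ => gaussianReal 0 1) =
      (if p = q then (1:ℝ) else 0) * (if r = s then (1:ℝ) else 0) +
      (if p = r then (1:ℝ) else 0) * (if q = s then (1:ℝ) else 0) +
      (if p = s then (1:ℝ) else 0) * (if q = r then (1:ℝ) else 0) := by
  calc ∫ ω : ι → ℝ, ω p * ω q * ω r * ω s ∂(Measure.pi fun _ => gaussianReal 0 1)
      = ∫ ω : ι → ℝ, ∏ t, ω t ^ (cnt p q r s t) ∂(Measure.pi fun _ => gaussianReal 0 1) :=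
        integral_congr_ae (Filter.Eventually.of_forall fun ω => mul_eq_prod p q r s ω)
    _ = ∏ t, ∫ x : ℝ, x ^ (cnt p q r s t) ∂(gaussianReal 0 1) :=
        my_integral_fintype_prod (gaussianReal 0 1) (fun t x => x ^ (cnt p q r s t))
    _ = ∏ t, gmom (cnt p q r s t) := rfl
    _ = _ := prod_gmom_cnt p q r s

end E4

end RGSOE

end Auxiliary

namespace RGSOE2

open RGSOE

variable {d : ℕ}

/-- The generic summand in the expansion of `(M A Mᵀ B M C Mᵀ) i i'`;
`t = (g, f, e, c, b, a)`. -/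
def Fn (A B C : Matrix (Fin d) (Fin d) ℝ) (i i' : Fin d)
    (t : Fin d × Fin d × Fin d × Fin d × Fin d × Fin d) (ω : Fin d × Fin d → ℝ) : ℝ :=
  ω (i, t.2.2.2.2.2) * A t.2.2.2.2.2 t.2.2.2.2.1 * ω (t.2.2.2.1, t.2.2.2.2.1) *
    B t.2.2.2.1 t.2.2.1 * ω (t.2.2.1, t.2.1) * C t.2.1 t.1 * ω (i', t.1)

lemma expand (A B C : Matrix (Fin d) (Fin d) ℝ) (i i' : Fin d) (ω : Fin d × Fin d → ℝ) :
    (rmat ω * A * (rmat ω)ᵀ * B * rmat ω * C * (rmat ω)ᵀ) i i'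
      = ∑ t : Fin d × Fin d × Fin d × Fin d × Fin d × Fin d, Fn A B C i i' t ω := by
  simp only [Matrix.mul_apply, Matrix.transpose_apply, rmat, Matrix.of_apply, Finset.sum_mul,
    Fintype.sum_prod_type, Fn]

lemma integrable_Fn (A B C : Matrix (Fin d) (Fin d) ℝ) (i i' : Fin d)
    (t : Fin d × Fin d × Fin d × Fin d × Fin d × Fin d) :
    Integrable (fun ω => Fn A B C i i' t ω) (realGaussianMat d) := by
  obtain ⟨g, f, e, c, b, a⟩ := t
  have h1 : (fun ω : Fin d × Fin d → ℝ => Fn A B C i i' (g, f, e, c, b, a) ω)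
      = fun ω => (A a b * B c e * C f g) *
        (ω (i, a) * ω (c, b) * ω (e, f) * ω (i', g)) := by
    funext ω; simp only [Fn]; ring
  rw [h1]
  exact (integrable_four (i, a) (c, b) (e, f) (i', g)).const_mul _

lemma key (A B C : Matrix (Fin d) (Fin d) ℝ) (i i' : Fin d)
    (t : Fin d × Fin d × Fin d × Fin d × Fin d × Fin d) :
    ∫ ω, Fn A B C i i' t ω ∂(realGaussianMat d)
      = (A t.2.2.2.2.2 t.2.2.2.2.1 * B t.2.2.2.1 t.2.2.1 * C t.2.1 t.1) *
        ((if (i, t.2.2.2.2.2) = (t.2.2.2.1, t.2.2.2.2.1) then (1:ℝ) else 0) *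
            (if ((t.2.2.1 : Fin d), t.2.1) = (i', t.1) then (1:ℝ) else 0) +
          (if (i, t.2.2.2.2.2) = (t.2.2.1, t.2.1) then (1:ℝ) else 0) *
            (if ((t.2.2.2.1 : Fin d), t.2.2.2.2.1) = (i', t.1) then (1:ℝ) else 0) +
          (if (i, t.2.2.2.2.2) = (i', t.1) then (1:ℝ) else 0) *
            (if ((t.2.2.2.1 : Fin d), t.2.2.2.2.1) = (t.2.2.1, t.2.1) then (1:ℝ) else 0)) := by
  obtain ⟨g, f, e, c, b, a⟩ := t
  have h1 : (fun ω : Fin d × Fin d → ℝ => Fn A B C i i' (g, f, e, c, b, a) ω)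
      = fun ω => (A a b * B c e * C f g) *
        (ω (i, a) * ω (c, b) * ω (e, f) * ω (i', g)) := by
    funext ω; simp only [Fn]; ring
  rw [h1, MeasureTheory.integral_const_mul]
  show (A a b * B c e * C f g) *
      (∫ ω : Fin d × Fin d → ℝ, ω (i, a) * ω (c, b) * ω (e, f) * ω (i', g)
        ∂(Measure.pi fun _ => gaussianReal 0 1)) = _
  rw [E4 (i, a) (c, b) (e, f) (i', g)]

end RGSOE2

/-- For a standard real Gaussian matrix `M` and fixed matrices `A`, `B`, `C`,
`E[M A Mᵀ B M C Mᵀ] = tr A tr C · B + tr(AC) tr B · I + tr(ACᵀ) · Bᵀ`, entrywise. -/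
theorem real_gaussian_second_order_expectation {d : ℕ} (hd : 1 ≤ d)
    (A B C : Matrix (Fin d) (Fin d) ℝ) (i i' : Fin d) :
    ∫ ω : Fin d × Fin d → ℝ,
        (rmat ω * A * (rmat ω)ᵀ * B * rmat ω * C * (rmat ω)ᵀ) i i' ∂(realGaussianMat d)
      = A.trace * C.trace * B i i' +
          (A * C).trace * B.trace * (1 : Matrix (Fin d) (Fin d) ℝ) i i' +
          (A * Cᵀ).trace * Bᵀ i i' := by
  classical
  rw [integral_congr_ae (Filter.Eventually.of_forall (RGSOE2.expand A B C i i')),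
    integral_finset_sum _ (fun t _ => RGSOE2.integrable_Fn A B C i i' t)]
  simp only [RGSOE2.key]
  simp only [mul_add]
  rw [Finset.sum_add_distrib, Finset.sum_add_distrib]
  have S1 : ∑ t : Fin d × Fin d × Fin d × Fin d × Fin d × Fin d,
      (A t.2.2.2.2.2 t.2.2.2.2.1 * B t.2.2.2.1 t.2.2.1 * C t.2.1 t.1) *
        ((if (i, t.2.2.2.2.2) = (t.2.2.2.1, t.2.2.2.2.1) then (1:ℝ) else 0) *
          (if ((t.2.2.1 : Fin d), t.2.1) = (i', t.1) then (1:ℝ) else 0))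
      = A.trace * C.trace * B i i' := by
    simp only [Fintype.sum_prod_type, Prod.mk.injEq, ite_and, mul_ite, ite_mul, mul_zero,
      zero_mul, mul_one, one_mul, Finset.sum_ite_irrel, Finset.sum_const_zero, Finset.sum_ite_eq,
      Finset.sum_ite_eq', Finset.mem_univ, if_true]
    simp only [Matrix.trace, Matrix.diag, Finset.sum_mul, Finset.mul_sum]
    exact Finset.sum_congr rfl fun a _ => Finset.sum_congr rfl fun f _ => by ring
  have S2 : ∑ t : Fin d × Fin d × Fin d × Fin d × Fin d × Fin d,
      (A t.2.2.2.2.2 t.2.2.2.2.1 * B t.2.2.2.1 t.2.2.1 * C t.2.1 t.1) *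
        ((if (i, t.2.2.2.2.2) = (t.2.2.1, t.2.1) then (1:ℝ) else 0) *
          (if ((t.2.2.2.1 : Fin d), t.2.2.2.2.1) = (i', t.1) then (1:ℝ) else 0))
      = (A * Cᵀ).trace * Bᵀ i i' := by
    simp only [Fintype.sum_prod_type, Prod.mk.injEq, ite_and, mul_ite, ite_mul, mul_zero,
      zero_mul, mul_one, one_mul, Finset.sum_ite_irrel, Finset.sum_const_zero, Finset.sum_ite_eq,
      Finset.sum_ite_eq', Finset.mem_univ, if_true]
    simp only [Matrix.trace, Matrix.diag, Matrix.mul_apply, Matrix.transpose_apply,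
      Finset.sum_mul, Finset.mul_sum]
    rw [Finset.sum_comm]
    exact Finset.sum_congr rfl fun a _ => Finset.sum_congr rfl fun f _ => by ring
  have S3 : ∑ t : Fin d × Fin d × Fin d × Fin d × Fin d × Fin d,
      (A t.2.2.2.2.2 t.2.2.2.2.1 * B t.2.2.2.1 t.2.2.1 * C t.2.1 t.1) *
        ((if (i, t.2.2.2.2.2) = (i', t.1) then (1:ℝ) else 0) *
          (if ((t.2.2.2.1 : Fin d), t.2.2.2.2.1) = (t.2.2.1, t.2.1) then (1:ℝ) else 0))
      = (A * C).trace * B.trace * (1 : Matrix (Fin d) (Fin d) ℝ) i i' := by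
    simp only [Fintype.sum_prod_type, Prod.mk.injEq, ite_and, mul_ite, ite_mul, mul_zero,
      zero_mul, mul_one, one_mul, Finset.sum_ite_irrel, Finset.sum_const_zero, Finset.sum_ite_eq,
      Finset.sum_ite_eq', Finset.mem_univ, if_true]
    simp only [Matrix.trace, Matrix.diag, Matrix.mul_apply, Matrix.one_apply,
      Finset.sum_mul, Finset.mul_sum]
    by_cases hii : i = i'
    · simp only [hii, if_true, mul_one]
      calc ∑ x : Fin d, ∑ y : Fin d, ∑ z : Fin d, A x y * B z z * C y x
          = ∑ x : Fin d, ∑ z : Fin d, ∑ y : Fin d, A x y * B z z * C y x :=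
            Finset.sum_congr rfl fun x _ => Finset.sum_comm
        _ = ∑ z : Fin d, ∑ x : Fin d, ∑ y : Fin d, A x y * B z z * C y x :=
            Finset.sum_comm
        _ = _ := Finset.sum_congr rfl fun z _ => Finset.sum_congr rfl fun x _ =>
            Finset.sum_congr rfl fun y _ => by ring
    · simp [hii]
  rw [S1, S2, S3]
  ring
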